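/- (Convexity step in the stability estimate.) Let 0 < k and λ > 0, and let f_0(x,v) = ((E_0 - E(x,v))/λ)_+^k where E(x,v) = |v|²/2 + U_e(x) for some measurable potential U_e. Then for any nonnegative f with ∫∫ f = ∫∫ f_0 and ∫∫ f^{1+1/k} = ∫∫ f_0^{1+1/k}, the quantity d(f,f_0) := ∫∫ E(x,v)(f - f_0) dv dx satisfies d(f,f_0) ≥ ∫∫ [(E - E_0) + λ f_0^{1/k}] (f - f_0) dv dx ≥ 0, and d(f,f_0) = 0 implies f = f_0 almost everywhere. -/

import Mathlib

open MeasureTheory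
noncomputable section

abbrev E3 := EuclideanSpace ℝ (Fin 3)

/-- The particle energy `E(x,v) = |v|²/2 + U_e(x)`. -/
def particleEnergy (Ue : E3 → ℝ) (p : E3 × E3) : ℝ := ‖p.2‖^2 / 2 + Ue p.1

lemma tangent_lt {q a b : ℝ} (hq : 1 < q) (ha : 0 ≤ a) (hb : 0 ≤ b) (hab : a ≠ b) :
    q * b ^ (q - 1) * (a - b) < a ^ q - b ^ q := by
  rcases hb.eq_or_lt with rfl | hb'
  · rw [Real.zero_rpow (by linarith : q - 1 ≠ 0), Real.zero_rpow (by linarith : q ≠ 0)]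
    have : 0 < a := lt_of_le_of_ne ha (Ne.symm hab)
    simpa using Real.rpow_pos_of_pos this q
  · set s := (a - b) / b with hs_def
    have hs : -1 ≤ s := by
      rw [hs_def, le_div_iff₀ hb']
      linarith
    have hs' : s ≠ 0 := by
      rw [hs_def]
      exact div_ne_zero (sub_ne_zero.mpr hab) hb'.ne'
    have hbern := one_add_mul_self_lt_rpow_one_add hs hs' hq
    have h1s : 1 + s = a / b := by rw [hs_def, one_add_div hb'.ne']; congr 1; ring
    rw [h1s] at hbern
    have hdiv : (a / b) ^ q = a ^ q / b ^ q := Real.div_rpow ha hb'.le q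
    rw [hdiv] at hbern
    have hbq : (0:ℝ) < b ^ q := Real.rpow_pos_of_pos hb' q
    have hbq1 : b ^ (q - 1) = b ^ q / b := by
      rw [Real.rpow_sub hb', Real.rpow_one]
    have := mul_lt_mul_of_pos_right hbern hbq
    rw [div_mul_cancel₀ _ hbq.ne'] at this
    have hsb : s * b ^ q = (a - b) * b ^ (q - 1) := by
      rw [hbq1, hs_def]; field_simp
    nlinarith [this, hsb]

lemma tangent_le {q a b : ℝ} (hq : 1 < q) (ha : 0 ≤ a) (hb : 0 ≤ b) :
    q * b ^ (q - 1) * (a - b) ≤ a ^ q - b ^ q := by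
  rcases eq_or_ne a b with rfl | hab
  · simp
  · exact (tangent_lt hq ha hb hab).le

/-- convexity step: if `f₀ = ((E₀-E)/λ)₊^k` and `f ≥ 0` has the same mass and
the same `L^{1+1/k}` Casimir as `f₀`, then
`d(f,f₀) = ∫∫ E (f-f₀) ≥ ∫∫ [(E-E₀)+λ f₀^{1/k}](f-f₀) ≥ 0`, with `d(f,f₀)=0` only if
`f = f₀` a.e. -/
theorem statement18 (k lam E₀ : ℝ) (hk : 0 < k) (hl : 0 < lam)
    (Ue : E3 → ℝ) (hUe : Measurable Ue)
    (f f₀ : E3 × E3 → ℝ) (hfm : Measurable f) (hf0 : ∀ p, 0 ≤ f p)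
    (hf₀def : ∀ p, f₀ p = (max ((E₀ - particleEnergy Ue p) / lam) 0) ^ k)
    (hfi : Integrable f) (hf₀i : Integrable f₀)
    (hfp : Integrable (fun p => f p ^ (1 + 1/k)))
    (hf₀p : Integrable (fun p => f₀ p ^ (1 + 1/k)))
    (hEf : Integrable (fun p => particleEnergy Ue p * f p))
    (hEf₀ : Integrable (fun p => particleEnergy Ue p * f₀ p))
    (hmass : (∫ p, f p) = ∫ p, f₀ p)
    (hcas : (∫ p, f p ^ (1 + 1/k)) = ∫ p, f₀ p ^ (1 + 1/k)) :
    (∫ p, ((particleEnergy Ue p - E₀) + lam * f₀ p ^ (1/k)) * (f p - f₀ p)) ≤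
      (∫ p, particleEnergy Ue p * (f p - f₀ p)) ∧
    0 ≤ (∫ p, ((particleEnergy Ue p - E₀) + lam * f₀ p ^ (1/k)) * (f p - f₀ p)) ∧
    ((∫ p, particleEnergy Ue p * (f p - f₀ p)) = 0 → f =ᵐ[volume] f₀) := by
  set q : ℝ := 1 + 1/k with hqdef
  have hkinv : (0:ℝ) < 1/k := by positivity
  have hq : 1 < q := by rw [hqdef]; linarith
  have hq0 : 0 < q := lt_trans one_pos hq
  have hq1 : q - 1 = 1/k := by rw [hqdef]; ring
  set Ep : E3 × E3 → ℝ := particleEnergy Ue with hEpdef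
  set m : E3 × E3 → ℝ := fun p => max (E₀ - Ep p) 0 with hmdef
  -- basic pointwise facts
  have hf₀nn : ∀ p, 0 ≤ f₀ p := fun p => by
    rw [hf₀def p]; exact Real.rpow_nonneg (le_max_right _ _) k
  have hf₀zero : ∀ p, E₀ - Ep p ≤ 0 → f₀ p = 0 := fun p h => by
    rw [hf₀def p, max_eq_right (div_nonpos_of_nonpos_of_nonneg h hl.le),
      Real.zero_rpow hk.ne']
  have hpow : ∀ p, lam * f₀ p ^ (1/k) = m p := fun p => by
    rw [hf₀def p, ← Real.rpow_mul (le_max_right _ _), mul_one_div_cancel hk.ne',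
      Real.rpow_one]
    simp only [hmdef]
    rcases le_total (E₀ - Ep p) 0 with h | h
    · rw [max_eq_right (div_nonpos_of_nonpos_of_nonneg h hl.le), max_eq_right h, mul_zero]
    · rw [max_eq_left (div_nonneg h hl.le), max_eq_left h]; field_simp
  have hA : ∀ p, ((Ep p - E₀) + lam * f₀ p ^ (1/k)) * (f p - f₀ p)
      = max (Ep p - E₀) 0 * f p := fun p => by
    rw [hpow p]
    simp only [hmdef]
    rcases le_total (E₀ - Ep p) 0 with h | h
    · rw [hf₀zero p h, max_eq_right h, max_eq_left (by linarith : (0:ℝ) ≤ Ep p - E₀)]; ring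
    · rw [max_eq_left h, max_eq_right (by linarith : Ep p - E₀ ≤ (0:ℝ))]; ring
  have hmf₀q : ∀ p, m p * f₀ p = lam * f₀ p ^ q := fun p => by
    rw [← hpow p]
    rcases (hf₀nn p).eq_or_lt with h | h
    · rw [← h]; simp [Real.zero_rpow hq0.ne', Real.zero_rpow hkinv.ne']
    · have hadd : f₀ p ^ ((1:ℝ)/k + 1) = f₀ p ^ ((1:ℝ)/k) * f₀ p ^ (1:ℝ) :=
        Real.rpow_add h _ _
      rw [Real.rpow_one] at hadd
      rw [show q = (1:ℝ)/k + 1 by rw [hqdef]; ring, hadd]; ring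
  have hmf₀' : ∀ p, m p * f₀ p = E₀ * f₀ p - Ep p * f₀ p := fun p => by
    rcases le_total (E₀ - Ep p) 0 with h | h
    · rw [hf₀zero p h]; ring
    · simp only [hmdef]; rw [max_eq_left h]; ring
  -- integrability
  have hEmeas : Measurable Ep := by
    rw [hEpdef]; unfold particleEnergy
    exact ((measurable_snd.norm.pow measurable_const).div_const 2).add
      (hUe.comp measurable_fst)
  have hmmeas : Measurable m := (measurable_const.sub hEmeas).max measurable_const
  have Imf : Integrable (fun p => m p * f p) := by
    apply Integrable.mono' (((hfi.const_mul E₀).sub hEf).abs)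
      ((hmmeas.mul hfm).aestronglyMeasurable)
    filter_upwards with p
    have h1 : 0 ≤ m p := le_max_right _ _
    have h2 : m p ≤ |E₀ - Ep p| := max_le (le_abs_self _) (abs_nonneg _)
    simp only [Real.norm_eq_abs, Pi.mul_apply, Pi.sub_apply]
    rw [abs_of_nonneg (mul_nonneg h1 (hf0 p))]
    calc m p * f p ≤ |E₀ - Ep p| * f p := mul_le_mul_of_nonneg_right h2 (hf0 p)
      _ = |(E₀ - Ep p) * f p| := by rw [abs_mul, abs_of_nonneg (hf0 p)]
      _ = |E₀ * f p - Ep p * f p| := by ring_nf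
  have Imf₀ : Integrable (fun p => m p * f₀ p) :=
    (hf₀p.const_mul lam).congr (Filter.Eventually.of_forall fun p => (hmf₀q p).symm)
  -- integral computations
  have eA : (∫ p, ((Ep p - E₀) + lam * f₀ p ^ (1/k)) * (f p - f₀ p))
      = (∫ p, Ep p * f p) - E₀ * (∫ p, f p) + ∫ p, m p * f p := by
    rw [show (fun p => ((Ep p - E₀) + lam * f₀ p ^ (1/k)) * (f p - f₀ p))
        = fun p => (Ep p * f p - E₀ * f p) + m p * f p from funext fun p => by
      rw [hA p]
      rcases le_total (E₀ - Ep p) 0 with h | h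
      · rw [max_eq_left (by linarith : (0:ℝ) ≤ Ep p - E₀)]; simp only [hmdef]
        rw [max_eq_right h]; ring
      · rw [max_eq_right (by linarith : Ep p - E₀ ≤ (0:ℝ))]; simp only [hmdef]
        rw [max_eq_left h]; ring]
    have e1 : ∫ p, ((Ep p * f p - E₀ * f p) + m p * f p)
        = (∫ p, (Ep p * f p - E₀ * f p)) + ∫ p, m p * f p :=
      integral_add (hEf.sub (hfi.const_mul E₀)) Imf
    have e2 : ∫ p, (Ep p * f p - E₀ * f p) = (∫ p, Ep p * f p) - ∫ p, E₀ * f p :=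
      integral_sub hEf (hfi.const_mul E₀)
    have e3 : ∫ p, E₀ * f p = E₀ * ∫ p, f p := integral_const_mul E₀ f
    rw [e1, e2, e3]
  have eE : (∫ p, Ep p * (f p - f₀ p)) = (∫ p, Ep p * f p) - ∫ p, Ep p * f₀ p := by
    rw [show (fun p => Ep p * (f p - f₀ p)) = fun p => Ep p * f p - Ep p * f₀ p from
      funext fun p => mul_sub _ _ _]
    exact integral_sub hEf hEf₀
  have emf₀ : (∫ p, m p * f₀ p) = E₀ * (∫ p, f₀ p) - ∫ p, Ep p * f₀ p := by
    rw [show (fun p => m p * f₀ p) = fun p => E₀ * f₀ p - Ep p * f₀ p from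
      funext fun p => hmf₀' p]
    rw [integral_sub (hf₀i.const_mul E₀) hEf₀, integral_const_mul]
  -- the convexity (tangent-line) pointwise estimates
  have hptle : ∀ p, m p * f p - m p * f₀ p ≤ (lam/q) * (f p ^ q - f₀ p ^ q) := fun p => by
    have htan := tangent_le hq (hf0 p) (hf₀nn p)
    rw [hq1] at htan
    calc m p * f p - m p * f₀ p
        = (lam/q) * (q * f₀ p ^ ((1:ℝ)/k) * (f p - f₀ p)) := by
          rw [← hpow p]; field_simp
      _ ≤ (lam/q) * (f p ^ q - f₀ p ^ q) :=
          mul_le_mul_of_nonneg_left htan (by positivity)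
  have hptlt : ∀ p, f p ≠ f₀ p →
      m p * f p - m p * f₀ p < (lam/q) * (f p ^ q - f₀ p ^ q) := fun p hne => by
    have htan := tangent_lt hq (hf0 p) (hf₀nn p) hne
    rw [hq1] at htan
    calc m p * f p - m p * f₀ p
        = (lam/q) * (q * f₀ p ^ ((1:ℝ)/k) * (f p - f₀ p)) := by
          rw [← hpow p]; field_simp
      _ < (lam/q) * (f p ^ q - f₀ p ^ q) :=
          (mul_lt_mul_iff_right₀ (by positivity)).mpr htan
  -- the nonnegative "defect" h and its integral
  have Ih : Integrable (fun p => (lam/q) * (f p ^ q - f₀ p ^ q) - (m p * f p - m p * f₀ p)) :=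
    ((hfp.sub hf₀p).const_mul _).sub (Imf.sub Imf₀)
  have hhnn : ∀ p, 0 ≤ (lam/q) * (f p ^ q - f₀ p ^ q) - (m p * f p - m p * f₀ p) :=
    fun p => by linarith [hptle p]
  have eIh : (∫ p, ((lam/q) * (f p ^ q - f₀ p ^ q) - (m p * f p - m p * f₀ p)))
      = (∫ p, m p * f₀ p) - ∫ p, m p * f p := by
    have e1 : ∫ p, ((lam/q) * (f p ^ q - f₀ p ^ q) - (m p * f p - m p * f₀ p))
        = (∫ p, (lam/q) * (f p ^ q - f₀ p ^ q)) - ∫ p, (m p * f p - m p * f₀ p) :=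
      integral_sub ((hfp.sub hf₀p).const_mul _) (Imf.sub Imf₀)
    have e2 : ∫ p, (lam/q) * (f p ^ q - f₀ p ^ q) = (lam/q) * ∫ p, (f p ^ q - f₀ p ^ q) :=
      integral_const_mul _ _
    have e3 : ∫ p, (f p ^ q - f₀ p ^ q) = (∫ p, f p ^ q) - ∫ p, f₀ p ^ q :=
      integral_sub hfp hf₀p
    have e4 : ∫ p, (m p * f p - m p * f₀ p) = (∫ p, m p * f p) - ∫ p, m p * f₀ p :=
      integral_sub Imf Imf₀
    rw [e1, e2, e3, e4, hcas]
    ring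
  have hIhnn : (0:ℝ) ≤ ∫ p, ((lam/q) * (f p ^ q - f₀ p ^ q) - (m p * f p - m p * f₀ p)) :=
    integral_nonneg hhnn
  have hkey : (∫ p, m p * f p) ≤ ∫ p, m p * f₀ p := by linarith [eIh ▸ hIhnn]
  have hm2 : E₀ * (∫ p, f p) = E₀ * ∫ p, f₀ p := by rw [hmass]
  have claim2 : (0:ℝ) ≤ ∫ p, ((Ep p - E₀) + lam * f₀ p ^ (1/k)) * (f p - f₀ p) :=
    integral_nonneg fun p => by
      rw [hA p]; exact mul_nonneg (le_max_right _ _) (hf0 p)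
  refine ⟨?_, claim2, ?_⟩
  · rw [eA, eE]; linarith
  · intro hd
    rw [eE] at hd
    have hIh0 : (∫ p, ((lam/q) * (f p ^ q - f₀ p ^ q) - (m p * f p - m p * f₀ p))) = 0 := by
      have := claim2
      rw [eA] at this
      linarith [eIh]
    have hae : (fun p => (lam/q) * (f p ^ q - f₀ p ^ q) - (m p * f p - m p * f₀ p))
        =ᵐ[volume] 0 := by
      rw [← integral_eq_zero_iff_of_nonneg hhnn Ih]
      exact hIh0
    filter_upwards [hae] with p hp
    by_contra hne
    have := hptlt p hne
    simp only [Pi.zero_apply] at hp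
    linarith
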